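/- For m ≥ 2, the number of 4-tuples (a_1,a_2,a_3,a_4) in (Z/2^m Z)^4 with M_4(a_1,a_2,a_3,a_4) = -Id equals 2^m. -/

import Mathlib

open Matrix

def matM {A : Type*} [CommRing A] (x : A) : Matrix (Fin 2) (Fin 2) A := !![x, -1; 1, 0]

def Mn {A : Type*} [CommRing A] {n : ℕ} (a : Fin n → A) : Matrix (Fin 2) (Fin 2) A :=
  ((List.ofFn fun i => matM (a i)).reverse).prod

theorem Mn_four {A : Type*} [CommRing A] (f : Fin 4 → A) :
    Mn f = !![f 3*(f 2*(f 1*f 0-1)-f 0) - (f 1*f 0-1), f 3*(1-f 2*f 1)+f 1;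
              f 2*(f 1*f 0-1)-f 0, 1-f 2*f 1] := by
  have h : Mn f = matM (f 3) * (matM (f 2) * (matM (f 1) * matM (f 0))) := by
    simp [Mn, List.ofFn_succ, mul_assoc, show (Fin.succ 2 : Fin 4) = 3 from rfl]
  rw [h]
  simp [matM, Matrix.mul_fin_two]
  ring_nf
  simp

theorem mn_key {A : Type*} [CommRing A] (f : Fin 4 → A) :
    Mn f = -1 ↔ f 2 = f 0 ∧ f 3 = f 1 ∧ f 0 * f 1 = 2 := by
  rw [Mn_four]
  have hneg : (-1 : Matrix (Fin 2) (Fin 2) A) = !![-1, 0; 0, -1] := by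
    ext i j; fin_cases i <;> fin_cases j <;> simp [Matrix.one_apply]
  rw [hneg, ← Matrix.ext_iff]
  simp only [Fin.forall_fin_two, Matrix.of_apply, Matrix.cons_val', Matrix.cons_val_zero,
    Matrix.cons_val_one, Matrix.head_cons, Matrix.empty_val', Matrix.cons_val_fin_one,
    Matrix.head_fin_const]
  constructor
  · rintro ⟨⟨h00, h01⟩, h10, h11⟩
    have hab : f 0 * f 1 = 2 := by linear_combination -h00 + f 3 * h10
    refine ⟨?_, ?_, hab⟩
    · linear_combination h10 - f 2 * hab
    · linear_combination -h01 + f 3 * h11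
  · rintro ⟨h2, h3, hab⟩
    rw [h2, h3]
    refine ⟨⟨?_, ?_⟩, ?_, ?_⟩
    · linear_combination (f 0 * f 1 - 1) * hab
    · linear_combination -f 1 * hab
    · linear_combination f 0 * hab
    · linear_combination -hab

theorem two_not_unit (m : ℕ) (hm : 2 ≤ m) : ¬ IsUnit (2 : ZMod (2^m)) := by
  haveI : NeZero (2^m) := ⟨pow_ne_zero _ two_ne_zero⟩
  intro h
  rw [show ((2 : ZMod (2^m)) = ((2:ℕ) : ZMod (2^m))) by push_cast; ring,
    ZMod.isUnit_iff_coprime] at h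
  have : ¬ Nat.Coprime 2 (2^m) := by
    rw [Nat.coprime_pow_right_iff (by omega)]
    decide
  exact this h

theorem unit_or (m : ℕ) (hm : 2 ≤ m) (a b : ZMod (2^m)) (hab : a * b = 2) :
    IsUnit a ∨ IsUnit b := by
  haveI : NeZero (2^m) := ⟨pow_ne_zero _ two_ne_zero⟩
  by_contra h
  push_neg at h
  obtain ⟨ha, hb⟩ := h
  have heven : ∀ c : ZMod (2^m), ¬ IsUnit c → ∃ x, c = 2 * x := by
    intro c hc
    rcases Nat.even_or_odd c.val with he | ho
    · obtain ⟨k, hk⟩ := he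
      refine ⟨(k : ZMod (2^m)), ?_⟩
      rw [show c = ((c.val : ℕ) : ZMod (2^m)) from by simp [ZMod.natCast_val, ZMod.cast_id], hk]
      push_cast; ring
    · exfalso
      apply hc
      rw [show c = ((c.val : ℕ) : ZMod (2^m)) from by simp [ZMod.natCast_val, ZMod.cast_id],
        ZMod.isUnit_iff_coprime, Nat.coprime_pow_right_iff (by omega)]
      exact ho.coprime_two_right
  obtain ⟨x, hx⟩ := heven a ha
  obtain ⟨y, hy⟩ := heven b hb
  have h4 : (4 : ℕ) ∣ 2^m := by
    calc (4:ℕ) = 2^2 := by norm_num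
    _ ∣ 2^m := pow_dvd_pow 2 hm
  set φ := ZMod.castHom h4 (ZMod 4) with hφ
  have key4 : (2 * φ x) * (2 * φ y) = 2 := by
    have := congrArg φ hab
    rw [hx, hy, _root_.map_mul, _root_.map_mul, _root_.map_mul] at this
    rw [show φ 2 = 2 from map_ofNat φ 2] at this
    linear_combination this
  have : ∀ X Y : ZMod 4, (2 * X) * (2 * Y) ≠ 2 := by decide
  exact this _ _ key4

theorem count_pairs (m : ℕ) (hm : 2 ≤ m) :
    Nat.card {p : ZMod (2^m) × ZMod (2^m) // p.1 * p.2 = 2} = 2 ^ m := by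
  haveI : NeZero (2^m) := ⟨pow_ne_zero _ two_ne_zero⟩
  set N := 2^m with hN
  let g : (ZMod N)ˣ ⊕ (ZMod N)ˣ → {p : ZMod N × ZMod N // p.1 * p.2 = 2} := fun x =>
    match x with
    | .inl u => ⟨(↑u, 2 * ↑u⁻¹), by rw [mul_left_comm, Units.mul_inv, mul_one]⟩
    | .inr u => ⟨(2 * ↑u⁻¹, ↑u), by rw [mul_comm, mul_left_comm, Units.mul_inv, mul_one]⟩
  have hbij : Function.Bijective g := by
    constructor
    · rintro (u | u) (v | v) h <;>
        simp only [g, Subtype.mk.injEq, Prod.mk.injEq] at h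
      · exact congrArg Sum.inl (Units.ext h.1)
      · exfalso
        exact two_not_unit m hm ⟨u * v, by rw [Units.val_mul, h.1, mul_assoc, Units.inv_mul, mul_one]⟩
      · exfalso
        exact two_not_unit m hm ⟨v * u, by rw [Units.val_mul, h.2, mul_left_comm, Units.mul_inv, mul_one]⟩
      · exact congrArg Sum.inr (Units.ext h.2)
    · rintro ⟨⟨a, b⟩, hab⟩
      rcases unit_or m hm a b hab with ha | hb
      · refine ⟨.inl ha.unit, ?_⟩
        have h1 : (↑ha.unit⁻¹ : ZMod N) * a = 1 := by
          conv_rhs => rw [← Units.inv_mul ha.unit]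
          rw [ha.unit_spec]
        simp only [g, Subtype.mk.injEq, Prod.mk.injEq]
        exact ⟨ha.unit_spec, by linear_combination -(↑ha.unit⁻¹ : ZMod N) * hab + b * h1⟩
      · refine ⟨.inr hb.unit, ?_⟩
        have h1 : (↑hb.unit⁻¹ : ZMod N) * b = 1 := by
          conv_rhs => rw [← Units.inv_mul hb.unit]
          rw [hb.unit_spec]
        simp only [g, Subtype.mk.injEq, Prod.mk.injEq]
        exact ⟨by linear_combination -(↑hb.unit⁻¹ : ZMod N) * hab + a * h1, hb.unit_spec⟩
  rw [← Nat.card_eq_of_bijective g hbij, Nat.card_sum]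
  rw [Nat.card_eq_fintype_card, ZMod.card_units_eq_totient]
  rw [hN, Nat.totient_prime_pow Nat.prime_two (by omega)]
  have hm1 : m - 1 + 1 = m := by omega
  rw [show 2 - 1 = 1 from rfl, mul_one, ← two_mul, ← pow_succ', hm1]

theorem stmt8 (m : ℕ) (hm : 2 ≤ m) :
    Nat.card {a : Fin 4 → ZMod (2 ^ m) //
      Mn a = (-1 : Matrix (Fin 2) (Fin 2) (ZMod (2 ^ m)))} = 2 ^ m := by
  have e : {a : Fin 4 → ZMod (2 ^ m) //
      Mn a = (-1 : Matrix (Fin 2) (Fin 2) (ZMod (2 ^ m)))} ≃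
      {p : ZMod (2^m) × ZMod (2^m) // p.1 * p.2 = 2} :=
    { toFun := fun f => ⟨(f.1 0, f.1 1), ((mn_key f.1).mp f.2).2.2⟩
      invFun := fun p => ⟨![p.1.1, p.1.2, p.1.1, p.1.2],
        (mn_key _).mpr ⟨rfl, rfl, p.2⟩⟩
      left_inv := fun f => Subtype.ext (funext fun i => by
        obtain ⟨h2, h3, -⟩ := (mn_key f.1).mp f.2
        fin_cases i <;> simp_all)
      right_inv := fun p => Subtype.ext rfl }
  rw [Nat.card_congr e, count_pairs m hm]
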